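/- Let Φ = (φ_1, …, φ_M) be a finite family of vectors in ℝ^N, and suppose c' ∈ ℝ^M with c'_i ≥ 0 attains the infimum of ‖I_N − S(c)‖₂ over all c ∈ ℝ^M with c_i ≥ 0. Then for every d ∈ ℝ^M with d_i ≥ 0 for all i, cond(S(c')) ≤ cond(S(d)); that is, S(c') has the smallest condition number among all matrices S(d) with nonnegative scalings d. -/

import Mathlib

/-- The ℓ²→ℓ² operator norm (largest singular value) of a square real matrix. -/
noncomputable def opNorm {N : ℕ} (A : Matrix (Fin N) (Fin N) ℝ) : ℝ :=
  ‖(Matrix.toEuclideanCLM (𝕜 := ℝ) A : EuclideanSpace ℝ (Fin N) →L[ℝ] EuclideanSpace ℝ (Fin N))‖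

/-- `frameOp φ c = ∑ i, c i • φ i φ iᵀ`. -/
noncomputable def frameOp {N M : ℕ} (φ : Fin M → (Fin N → ℝ)) (c : Fin M → ℝ) :
    Matrix (Fin N) (Fin N) ℝ :=
  ∑ i, c i • Matrix.vecMulVec (φ i) (φ i)

/-- The largest eigenvalue of a Hermitian real matrix. -/
noncomputable def lamMax {N : ℕ} {A : Matrix (Fin N) (Fin N) ℝ} (hA : A.IsHermitian) : ℝ :=
  ⨆ i, hA.eigenvalues i

/-- The smallest eigenvalue of a Hermitian real matrix. -/
noncomputable def lamMin {N : ℕ} {A : Matrix (Fin N) (Fin N) ℝ} (hA : A.IsHermitian) : ℝ :=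
  ⨅ i, hA.eigenvalues i

open Matrix in
lemma frameOp_posSemidef {N M : ℕ} (φ : Fin M → (Fin N → ℝ)) (c : Fin M → ℝ)
    (hc : ∀ i, 0 ≤ c i) : (frameOp φ c).PosSemidef := by
  have : frameOp φ c =
      (Matrix.of (fun i j => Real.sqrt (c i) * φ i j))ᴴ * Matrix.of (fun i j => Real.sqrt (c i) * φ i j) := by
    ext j k
    simp only [frameOp, Matrix.sum_apply, Matrix.smul_apply, vecMulVec_apply, smul_eq_mul,
      Matrix.mul_apply, conjTranspose_apply, Matrix.of_apply, star_trivial]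
    refine Finset.sum_congr rfl fun i _ => ?_
    rw [show Real.sqrt (c i) * φ i j * (Real.sqrt (c i) * φ i k)
        = (Real.sqrt (c i) * Real.sqrt (c i)) * (φ i j * φ i k) by ring,
      Real.mul_self_sqrt (hc i)]
  rw [this]
  exact posSemidef_conjTranspose_mul_self _

open Matrix in
lemma abs_le_opNorm_of_eigen {N : ℕ} {S B : Matrix (Fin N) (Fin N) ℝ} (hS : S.IsHermitian)
    (i : Fin N) {μ : ℝ}
    (h : B *ᵥ ⇑(hS.eigenvectorBasis i) = μ • ⇑(hS.eigenvectorBasis i)) : |μ| ≤ opNorm B := by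
  set b := hS.eigenvectorBasis
  have hb : ‖b i‖ = 1 := b.orthonormal.1 i
  have hBx : (toEuclideanCLM (𝕜 := ℝ) B) (b i) = μ • (b i) := by
    apply (WithLp.equiv 2 _).injective
    rw [WithLp.equiv_apply, ofLp_toEuclideanCLM]
    simpa using h
  have h2 := (toEuclideanCLM (𝕜 := ℝ) B).le_opNorm (b i)
  rw [hBx, norm_smul, hb, mul_one, mul_one, Real.norm_eq_abs] at h2
  exact h2

open Matrix in
lemma opNorm_le_of_eigen {N : ℕ} {S B : Matrix (Fin N) (Fin N) ℝ} (hS : S.IsHermitian)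
    {μ : Fin N → ℝ} {r : ℝ} (hr : 0 ≤ r)
    (h : ∀ i, B *ᵥ ⇑(hS.eigenvectorBasis i) = μ i • ⇑(hS.eigenvectorBasis i))
    (hμ : ∀ i, |μ i| ≤ r) : opNorm B ≤ r := by
  refine ContinuousLinearMap.opNorm_le_bound _ hr fun x => ?_
  set b := hS.eigenvectorBasis
  set T := (toEuclideanCLM (𝕜 := ℝ) B)
  have hT : ∀ i, T (b i) = μ i • (b i) := by
    intro i
    apply (WithLp.equiv 2 _).injective
    rw [WithLp.equiv_apply, ofLp_toEuclideanCLM]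
    simpa using h i
  have hTx : T x = b.repr.symm ((WithLp.equiv 2 _).symm (fun i => μ i * b.repr x i)) := by
    rw [← b.sum_repr_symm]
    conv_lhs => rw [← b.sum_repr x]
    rw [map_sum]
    refine Finset.sum_congr rfl fun i _ => ?_
    rw [T.map_smul, hT, smul_smul, mul_comm]
    rfl
  rw [hTx, LinearIsometryEquiv.norm_map]
  have hx : ‖x‖ = ‖b.repr x‖ := (b.repr.norm_map x).symm
  rw [hx, EuclideanSpace.norm_eq, EuclideanSpace.norm_eq]
  rw [← Real.sqrt_sq hr, ← Real.sqrt_mul (sq_nonneg r)]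
  apply Real.sqrt_le_sqrt
  rw [Finset.mul_sum]
  refine Finset.sum_le_sum fun i _ => ?_
  have h1 : |μ i * b.repr x i| ≤ r * |b.repr x i| := by
    rw [abs_mul]
    exact mul_le_mul_of_nonneg_right (hμ i) (abs_nonneg _)
  calc ‖(fun i => μ i * b.repr x i) i‖ ^ 2 = |μ i * b.repr x i| ^ 2 := by
        rw [Real.norm_eq_abs]
    _ ≤ (r * |b.repr x i|) ^ 2 := by
        exact pow_le_pow_left₀ (abs_nonneg _) h1 2
    _ = r ^ 2 * ‖b.repr x i‖ ^ 2 := by rw [Real.norm_eq_abs]; ring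

lemma frameOp_smul {N M : ℕ} (φ : Fin M → (Fin N → ℝ)) (d : Fin M → ℝ) (t : ℝ) :
    frameOp φ (fun i => t * d i) = t • frameOp φ d := by
  simp [frameOp, Finset.smul_sum, smul_smul]


/-- if `c' ≥ 0` attains the infimum of `‖I - S(c)‖₂` over `c ≥ 0`, then
`S(c')` has the smallest condition number among all `S(d)` with `d ≥ 0`; the inequality
`cond(S(c')) ≤ cond(S(d))` is expressed in the cross-multiplied form
`λ_max(S(c')) · λ_min(S(d)) ≤ λ_min(S(c')) · λ_max(S(d))`, which also covers the
value `∞` when the smallest eigenvalue vanishes. -/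
theorem stmt_5 (N M : ℕ) (hN : 0 < N) (φ : Fin M → (Fin N → ℝ))
    (hH : ∀ c : Fin M → ℝ, (frameOp φ c).IsHermitian)
    (c' : Fin M → ℝ) (hc' : ∀ i, 0 ≤ c' i)
    (hopt : ∀ d : Fin M → ℝ, (∀ i, 0 ≤ d i) →
      opNorm (1 - frameOp φ c') ≤ opNorm (1 - frameOp φ d)) :
    ∀ d : Fin M → ℝ, (∀ i, 0 ≤ d i) →
      lamMax (hH c') * lamMin (hH d) ≤ lamMin (hH c') * lamMax (hH d) := by
  intro d hd
  haveI : Nonempty (Fin N) := Fin.pos_iff_nonempty.mp hN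
  have hbddA : ∀ f : Fin N → ℝ, BddAbove (Set.range f) :=
    fun f => (Set.finite_range f).bddAbove
  have hbddB : ∀ f : Fin N → ℝ, BddBelow (Set.range f) :=
    fun f => (Set.finite_range f).bddBelow
  have hevd : ∀ i, 0 ≤ (hH d).eigenvalues i := (frameOp_posSemidef φ d hd).eigenvalues_nonneg
  have hevc : ∀ i, 0 ≤ (hH c').eigenvalues i := (frameOp_posSemidef φ c' hc').eigenvalues_nonneg
  set a := lamMin (hH d) with ha
  set A := lamMax (hH d) with hA
  have hle : ∀ i, a ≤ (hH d).eigenvalues i := fun i => ciInf_le (hbddB _) i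
  have hge : ∀ i, (hH d).eigenvalues i ≤ A := fun i => le_ciSup (hbddA _) i
  obtain ⟨im, him⟩ := exists_eq_ciInf_of_finite (f := (hH d).eigenvalues)
  obtain ⟨iM, hiM⟩ := exists_eq_ciSup_of_finite (f := (hH d).eigenvalues)
  have ha0 : 0 ≤ a := le_of_le_of_eq (hevd im) him
  have haA : a ≤ A := le_trans (hle iM) (le_of_eq hiM)
  -- lamMin c' and lamMax c' as attained values
  obtain ⟨jm, hjm⟩ := exists_eq_ciInf_of_finite (f := (hH c').eigenvalues)
  obtain ⟨jM, hjM⟩ := exists_eq_ciSup_of_finite (f := (hH c').eigenvalues)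
  have hm0 : 0 ≤ lamMin (hH c') := le_of_le_of_eq (hevc jm) hjm
  rcases eq_or_lt_of_le ha0 with h0 | hapos
  · -- a = 0
    rw [← h0, mul_zero]
    exact mul_nonneg hm0 (le_trans ha0 haA)
  · have hApos : 0 < A + a := by linarith
    set t : ℝ := 2 / (A + a) with htdef
    have htpos : 0 < t := by positivity
    set ρ : ℝ := (A - a) / (A + a) with hρdef
    have hρnn : 0 ≤ ρ := div_nonneg (by linarith) hApos.le
    have e1 : 1 - t * a = ρ := by rw [htdef, hρdef]; field_simp; ring
    have e2 : 1 - t * A = -ρ := by rw [htdef, hρdef]; field_simp; ring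
    have hub : opNorm (1 - frameOp φ (fun i => t * d i)) ≤ ρ := by
      rw [frameOp_smul]
      refine opNorm_le_of_eigen (hH d) hρnn
        (μ := fun i => 1 - t * (hH d).eigenvalues i) (fun i => ?_) (fun i => ?_)
      · rw [Matrix.sub_mulVec, Matrix.one_mulVec, Matrix.smul_mulVec,
          (hH d).mulVec_eigenvectorBasis, smul_smul, sub_smul, one_smul]
      · rw [abs_le]
        constructor
        · rw [← e2]
          have := mul_le_mul_of_nonneg_left (hge i) htpos.le
          linarith
        · rw [← e1]
          have := mul_le_mul_of_nonneg_left (hle i) htpos.le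
          linarith
    have hr : opNorm (1 - frameOp φ c') ≤ ρ :=
      le_trans (hopt (fun i => t * d i) (fun i => mul_nonneg htpos.le (hd i))) hub
    have hevc' : ∀ j, |1 - (hH c').eigenvalues j| ≤ ρ := by
      intro j
      refine le_trans (abs_le_opNorm_of_eigen (hH c') j ?_) hr
      rw [Matrix.sub_mulVec, Matrix.one_mulVec, (hH c').mulVec_eigenvectorBasis, sub_smul, one_smul]
    have hMeq : lamMax (hH c') = (hH c').eigenvalues jM := hjM.symm
    have hmeq : lamMin (hH c') = (hH c').eigenvalues jm := hjm.symm
    have hM' : lamMax (hH c') ≤ 1 + ρ := by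
      rw [hMeq]
      have := (abs_le.mp (hevc' jM)).1
      linarith
    have hm' : 1 - ρ ≤ lamMin (hH c') := by
      rw [hmeq]
      have := (abs_le.mp (hevc' jm)).2
      linarith
    have hρ2 : ρ * (A + a) = A - a := div_mul_cancel₀ _ hApos.ne'
    calc lamMax (hH c') * a ≤ (1 + ρ) * a := mul_le_mul_of_nonneg_right hM' ha0
      _ = (1 - ρ) * A := by linear_combination hρ2
      _ ≤ lamMin (hH c') * A := mul_le_mul_of_nonneg_right hm' (by linarith)
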